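/- arXiv:1901.08186 — 2 statements merged into one kernel-verified Lean document; each statement's English description precedes it below -/
import Mathlib

section
/- Let K be an invertible self-dual ℓ×ℓ matrix over F_2, fix i with 1 ≤ i ≤ ℓ, and let A'_j denote the number of vectors of Hamming weight j in the coset C_{ℓ-i} \ C_{ℓ+1-i}. Then for every w with 0 ≤ w ≤ ℓ, E_{i,w} ≥ binom(ℓ, w) − min( ∑_{j=0}^{ℓ-w} binom(ℓ-j, ℓ-w-j)·A'_j , binom(ℓ, ℓ-w) ). -/
/-- The support of a vector over `ZMod 2`. -/
def supp {ℓ : ℕ} (v : Fin ℓ → ZMod 2) : Set (Fin ℓ) := {j | v j ≠ 0}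

/-- The Hamming weight of a vector over `ZMod 2`. -/
def wt {ℓ : ℕ} (v : Fin ℓ → ZMod 2) : ℕ :=
  (Finset.univ.filter fun j => v j ≠ 0).card

/-- The kernel code `C_i`: the span of the rows `g_{i+1}, …, g_ℓ` of `K`
(rows of index `≥ i` in 0-based indexing). -/
def kernelCode {ℓ : ℕ} (K : Matrix (Fin ℓ) (Fin ℓ) (ZMod 2)) (i : ℕ) :
    Submodule (ZMod 2) (Fin ℓ → ZMod 2) :=
  Submodule.span (ZMod 2) {v | ∃ r : Fin ℓ, i ≤ (r : ℕ) ∧ v = K r}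

/-- `e` is an uncorrectable erasure pattern for the bit-channel of (0-based) index `i`. -/
def Uncorrectable {ℓ : ℕ} (K : Matrix (Fin ℓ) (Fin ℓ) (ZMod 2)) (i : Fin ℓ)
    (e : Fin ℓ → ZMod 2) : Prop :=
  ∃ u' u'' : Fin ℓ → ZMod 2,
    (∀ j, j < i → u' j = u'' j) ∧ u' i ≠ u'' i ∧
      ∀ j, e j = 0 → Matrix.vecMul u' K j = Matrix.vecMul u'' K j

/-- `E_{i,w}`: the number of uncorrectable erasure patterns of weight `w`
for bit-channel `i`. -/
noncomputable def Ecount {ℓ : ℕ} (K : Matrix (Fin ℓ) (Fin ℓ) (ZMod 2)) (i : Fin ℓ)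
    (w : ℕ) : ℕ :=
  Nat.card {e : Fin ℓ → ZMod 2 // Uncorrectable K i e ∧ wt e = w}

/-- `f_i(z) = ∑_{w=0}^{ℓ} E_{i,w} z^w (1-z)^{ℓ-w}`. -/
noncomputable def fpoly {ℓ : ℕ} (K : Matrix (Fin ℓ) (Fin ℓ) (ZMod 2)) (i : Fin ℓ)
    (z : ℝ) : ℝ :=
  ∑ w ∈ Finset.range (ℓ + 1), (Ecount K i w : ℝ) * z ^ w * (1 - z) ^ (ℓ - w)

/-- Dual code with respect to the standard bilinear form `⟨u,v⟩ = ∑ j, u j * v j`. -/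
def dualCode {ℓ : ℕ} (C : Submodule (ZMod 2) (Fin ℓ → ZMod 2)) :
    Submodule (ZMod 2) (Fin ℓ → ZMod 2) where
  carrier := {v | ∀ c ∈ C, ∑ j, v j * c j = 0}
  add_mem' := by
    intro a b ha hb c hc
    simpa [add_mul, Finset.sum_add_distrib] using by rw [ha c hc, hb c hc]; simp
  zero_mem' := by intro c hc; simp
  smul_mem' := by
    intro r a ha c hc
    simp only [Pi.smul_apply, smul_eq_mul, mul_assoc, ← Finset.mul_sum, Set.mem_setOf_eq]
    rw [ha c hc, mul_zero]

/-- `K` is self-dual if `C_i = C_{ℓ-i}^⊥` for all `0 ≤ i ≤ ℓ`. -/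
def SelfDual {ℓ : ℕ} (K : Matrix (Fin ℓ) (Fin ℓ) (ZMod 2)) : Prop :=
  ∀ i ≤ ℓ, kernelCode K i = dualCode (kernelCode K (ℓ - i))



open Finset

private lemma zmod2_cases : ∀ a : ZMod 2, a = 0 ∨ a = 1 := by decide
private lemma zmod2_ne_zero {a : ZMod 2} (h : a ≠ 0) : a = 1 := by
  rcases zmod2_cases a with h' | h' <;> simp_all

/-- The submodule of vectors vanishing on coordinates `< m`. -/
private def lowZero (ℓ m : ℕ) : Submodule (ZMod 2) (Fin ℓ → ZMod 2) where
  carrier := {a | ∀ r : Fin ℓ, (r : ℕ) < m → a r = 0}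
  add_mem' := by intro a b ha hb r hr; simp [ha r hr, hb r hr]
  zero_mem' := by intro r hr; simp
  smul_mem' := by intro c a ha r hr; simp [ha r hr]

private lemma kernelCode_eq_map {ℓ : ℕ} (K : Matrix (Fin ℓ) (Fin ℓ) (ZMod 2)) (m : ℕ) :
    kernelCode K m = (lowZero ℓ m).map K.vecMulLinear := by
  apply le_antisymm
  · rw [kernelCode, Submodule.span_le]
    rintro v ⟨r, hr, rfl⟩
    refine ⟨Pi.single r 1, fun r' hr' => ?_, by simp [Matrix.single_one_vecMul]; rfl⟩
    have : r' ≠ r := by rintro rfl; omega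
    simp [Pi.single_eq_of_ne this]
  · rintro _ ⟨a, ha, rfl⟩
    have hv : K.vecMulLinear a = ∑ r : Fin ℓ, a r • K r := by
      ext j
      simp [Matrix.vecMulLinear_apply, Matrix.vecMul, dotProduct,
        Finset.sum_apply]
    rw [hv]
    refine Submodule.sum_mem _ fun r _ => ?_
    by_cases h : (r : ℕ) < m
    · simp [ha r h]
    · exact Submodule.smul_mem _ _ (Submodule.subset_span ⟨r, by omega, rfl⟩)

private lemma stepA {ℓ : ℕ} (K : Matrix (Fin ℓ) (Fin ℓ) (ZMod 2)) (hsd : SelfDual K)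
    (i : Fin ℓ) (e : Fin ℓ → ZMod 2) (h : ¬ Uncorrectable K i e) :
    ∃ c, c ∈ kernelCode K ((i.rev : ℕ)) ∧ c ∉ kernelCode K (ℓ - (i : ℕ)) ∧
      ∀ j, e j ≠ 0 → c j = 0 := by
  classical
  set S := {j : Fin ℓ // e j = 0}
  set π : (Fin ℓ → ZMod 2) →ₗ[ZMod 2] (S → ZMod 2) :=
    LinearMap.funLeft (ZMod 2) (ZMod 2) Subtype.val with hπ
  set P : Submodule (ZMod 2) (S → ZMod 2) := (kernelCode K ((i : ℕ) + 1)).map π with hP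
  -- `π (K i) ∉ P`, else `e` would be uncorrectable
  have hnm : π (K i) ∉ P := by
    rintro ⟨c', hc', hcc⟩
    rw [kernelCode_eq_map] at hc'
    obtain ⟨a, ha, rfl⟩ := hc'
    refine h ⟨Pi.single i 1, a, fun j hj => ?_, ?_, fun j hj => ?_⟩
    · have h1 : (Pi.single i 1 : Fin ℓ → ZMod 2) j = 0 :=
        Pi.single_eq_of_ne (by exact fun hji => absurd hji (Fin.ne_of_lt hj)) 1
      have h2 : a j = 0 := ha j (by omega)
      rw [h1, h2]
    · have h1 : (Pi.single i 1 : Fin ℓ → ZMod 2) i = 1 := Pi.single_eq_same i 1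
      have h2 : a i = 0 := ha i (by omega)
      rw [h1, h2]; decide
    · have := congrFun hcc ⟨j, hj⟩
      simpa [π, LinearMap.funLeft, Matrix.single_one_vecMul] using this.symm
  obtain ⟨f, hf1, hf2⟩ := P.exists_dual_map_eq_bot_of_notMem hnm inferInstance
  -- construct the separating vector
  set v : Fin ℓ → ZMod 2 :=
    fun j => if h : e j = 0 then f (Pi.single (⟨j, h⟩ : S) 1) else 0 with hv
  have key : ∀ x : Fin ℓ → ZMod 2, ∑ j, v j * x j = f (π x) := by
    intro x
    have h1 : π x = ∑ s : S, (x s.val) • Pi.single s 1 := by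
      have := Finset.univ_sum_single (π x)
      rw [← this]
      refine Finset.sum_congr rfl fun s _ => ?_
      ext t
      by_cases hts : t = s <;> simp [Pi.single_apply, hts, π, LinearMap.funLeft]
    rw [h1, map_sum]
    have h2 : ∀ s : S, f ((x s.val) • Pi.single s 1) = v s.val * x s.val := by
      intro s
      have hvs : v s.val = f (Pi.single s 1) := by
        simp only [hv, s.prop, dif_pos]; rfl
      rw [map_smul, smul_eq_mul, hvs, mul_comm]
    rw [Finset.sum_congr rfl fun s _ => h2 s]
    rw [← Finset.sum_subtype (Finset.univ.filter fun j => e j = 0)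
      (by simp) (fun j => v j * x j)]
    symm
    apply Finset.sum_subset (Finset.subset_univ _)
    intro j _ hj
    simp only [Finset.mem_filter, Finset.mem_univ, true_and] at hj
    rw [hv]; simp [dif_neg hj]
  refine ⟨v, ?_, ?_, fun j hj => by rw [hv]; simp [dif_neg hj]⟩
  · -- v ∈ C_{ℓ-(i+1)} = dual C_{i+1}
    have hle : (i : ℕ) + 1 ≤ ℓ := i.isLt
    have hd := hsd (ℓ - ((i : ℕ) + 1)) (by omega)
    rw [show ℓ - (ℓ - ((i : ℕ) + 1)) = (i : ℕ) + 1 by omega] at hd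
    rw [Fin.val_rev, hd]
    intro c hc
    rw [key c]
    have : π c ∈ P := ⟨c, hc, rfl⟩
    have := Submodule.mem_map_of_mem (f := f) this
    rw [hf2, Submodule.mem_bot] at this
    exact this
  · -- v ∉ C_{ℓ-i} = dual C_i
    have hd := hsd (ℓ - (i : ℕ)) (by omega)
    rw [show ℓ - (ℓ - (i : ℕ)) = (i : ℕ) by omega] at hd
    rw [hd]
    intro hmem
    exact hf1 (by rw [← key (K i)]; exact hmem (K i) (Submodule.subset_span ⟨i, le_refl _, rfl⟩))

private lemma eq_of_filter_eq {ℓ : ℕ} {v v' : Fin ℓ → ZMod 2}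
    (h : (Finset.univ.filter fun j => v j ≠ 0) = (Finset.univ.filter fun j => v' j ≠ 0)) :
    v = v' := by
  funext j
  have := Finset.ext_iff.mp h j
  simp only [Finset.mem_filter, Finset.mem_univ, true_and] at this
  by_cases hj : v j = 0
  · by_cases hj' : v' j = 0
    · rw [hj, hj']
    · exact absurd (this.mpr hj') (by simp [hj])
  · rw [zmod2_ne_zero hj, zmod2_ne_zero (this.mp hj)]

private lemma card_wt_eq (ℓ m : ℕ) :
    ((Finset.univ : Finset (Fin ℓ → ZMod 2)).filter fun v => wt v = m).card = ℓ.choose m := by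
  classical
  have htarget : (Finset.powersetCard m (Finset.univ : Finset (Fin ℓ))).card = ℓ.choose m := by
    rw [Finset.card_powersetCard, Finset.card_univ, Fintype.card_fin]
  rw [← htarget]
  refine Finset.card_nbij' (fun v => Finset.univ.filter fun j => v j ≠ 0)
    (fun s => fun j => if j ∈ s then 1 else 0) ?_ ?_ ?_ ?_
  · intro v hv
    simp only [Finset.mem_coe, Finset.mem_filter, Finset.mem_univ, true_and] at hv
    rw [Finset.mem_coe, Finset.mem_powersetCard]
    exact ⟨Finset.subset_univ _, hv⟩
  · intro s hs
    rw [Finset.mem_coe, Finset.mem_powersetCard] at hs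
    rw [Finset.mem_coe, Finset.mem_filter]
    simp only [Finset.mem_univ, true_and, wt]
    rw [← hs.2]
    congr 1
    ext j
    simp only [Finset.mem_filter, Finset.mem_univ, true_and]
    by_cases hj : j ∈ s <;> simp [hj]
  · intro v _
    funext j
    by_cases hj : v j = 0 <;> simp [hj, zmod2_ne_zero]
  · intro s _
    ext j
    simp only [Finset.mem_filter, Finset.mem_univ, true_and]
    by_cases hj : j ∈ s <;> simp [hj]

private lemma cover_card_le {ℓ : ℕ} (c : Fin ℓ → ZMod 2) (m : ℕ) :
    ((Finset.univ : Finset (Fin ℓ → ZMod 2)).filter fun v =>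
        wt v = m ∧ ∀ j, c j ≠ 0 → v j ≠ 0).card ≤ (ℓ - wt c).choose (m - wt c) := by
  classical
  set Sc := Finset.univ.filter fun j => c j ≠ 0 with hSc
  have htarget : ((Finset.univ \ Sc).powersetCard (m - wt c)).card
      = (ℓ - wt c).choose (m - wt c) := by
    rw [Finset.card_powersetCard, Finset.card_sdiff_of_subset (Finset.subset_univ _),
      Finset.card_univ, Fintype.card_fin]
    rfl
  rw [← htarget]
  apply Finset.card_le_card_of_injOn
    (fun v => (Finset.univ.filter fun j => v j ≠ 0) \ Sc)
  · intro v hv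
    simp only [Finset.mem_coe, Finset.mem_filter, Finset.mem_univ, true_and] at hv
    obtain ⟨hwv, hcov⟩ := hv
    have hsub : Sc ⊆ Finset.univ.filter fun j => v j ≠ 0 := by
      intro j hj
      simp only [hSc, Finset.mem_filter, Finset.mem_univ, true_and] at hj ⊢
      exact hcov j hj
    rw [Finset.mem_coe, Finset.mem_powersetCard]
    constructor
    · exact Finset.sdiff_subset_sdiff (Finset.subset_univ _) le_rfl
    · rw [Finset.card_sdiff_of_subset hsub]
      show (Finset.univ.filter fun j => v j ≠ 0).card - Sc.card = m - wt c
      rw [← hwv]; rfl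
  · intro v hv v' hv' heq
    simp only at heq
    simp only [Finset.coe_filter, Set.mem_setOf_eq, Finset.mem_univ, true_and] at hv hv'
    have hsub : Sc ⊆ Finset.univ.filter fun j => v j ≠ 0 := by
      intro j hj
      simp only [hSc, Finset.mem_filter, Finset.mem_univ, true_and] at hj ⊢
      exact hv.2 j hj
    have hsub' : Sc ⊆ Finset.univ.filter fun j => v' j ≠ 0 := by
      intro j hj
      simp only [hSc, Finset.mem_filter, Finset.mem_univ, true_and] at hj ⊢
      exact hv'.2 j hj
    apply eq_of_filter_eq
    rw [← Finset.sdiff_union_of_subset hsub, ← Finset.sdiff_union_of_subset hsub', heq]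

private lemma nat_card_filter {α : Type*} [Fintype α] (p : α → Prop) [DecidablePred p] :
    Nat.card {x // p x} = (Finset.univ.filter p).card := by
  rw [Nat.card_eq_fintype_card, Fintype.card_subtype]

private lemma wt_add_one {ℓ : ℕ} (e : Fin ℓ → ZMod 2) :
    wt (fun j => e j + 1) = ℓ - wt e := by
  classical
  have key : ∀ a : ZMod 2, (a + 1 ≠ 0) ↔ ¬ (a ≠ 0) := by decide
  have h1 : (Finset.univ.filter fun j => e j + 1 ≠ 0)
      = Finset.univ.filter fun j => ¬ (e j ≠ 0) := by
    apply Finset.filter_congr; intro j _; simp only [key]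
  have h2 := Finset.card_filter_add_card_filter_not
    (s := (Finset.univ : Finset (Fin ℓ))) (p := fun j => e j ≠ 0)
  rw [Finset.card_univ, Fintype.card_fin] at h2
  rw [wt, h1, wt]
  omega

/-- Lower bound on `E_{i,w}` for a self-dual kernel, in terms of the weight enumerator
of the coset `C_{ℓ-i} \ C_{ℓ+1-i}`. -/
theorem Ecount_lower_bound {ℓ : ℕ} (hℓ : 0 < ℓ)
    (K : Matrix (Fin ℓ) (Fin ℓ) (ZMod 2)) (hK : IsUnit K.det)
    (hsd : SelfDual K) (i : Fin ℓ) (A' : ℕ → ℕ)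
    (hA' : ∀ j, A' j = Nat.card {c : Fin ℓ → ZMod 2 //
      c ∈ kernelCode K ((i.rev : ℕ)) ∧ c ∉ kernelCode K (ℓ - (i : ℕ)) ∧ wt c = j})
    (w : ℕ) (hw : w ≤ ℓ) :
    (ℓ.choose w : ℤ) -
        min (∑ j ∈ Finset.range (ℓ - w + 1), ((ℓ - j).choose (ℓ - w - j) : ℤ) * (A' j : ℤ))
          (ℓ.choose (ℓ - w) : ℤ) ≤
      (Ecount K i w : ℤ) := by
  classical
  set Unc := Finset.univ.filter
    (fun e : Fin ℓ → ZMod 2 => Uncorrectable K i e ∧ wt e = w) with hUnc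
  set Cor := Finset.univ.filter
    (fun e : Fin ℓ → ZMod 2 => ¬ Uncorrectable K i e ∧ wt e = w) with hCor
  have hE : Ecount K i w = Unc.card := by
    rw [Ecount, nat_card_filter]
  -- split of the total count
  have hsplit : Unc.card + Cor.card = ℓ.choose w := by
    rw [← card_wt_eq ℓ w]
    have h2 := Finset.card_filter_add_card_filter_not
      (s := Finset.univ.filter (fun e : Fin ℓ → ZMod 2 => wt e = w))
      (p := fun e => Uncorrectable K i e)
    rw [Finset.filter_filter, Finset.filter_filter] at h2
    have e1 : Finset.univ.filter (fun a : Fin ℓ → ZMod 2 => wt a = w ∧ Uncorrectable K i a)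
        = Unc := by
      ext e; simp only [hUnc, Finset.mem_filter]; tauto
    have e2 : Finset.univ.filter (fun a : Fin ℓ → ZMod 2 => wt a = w ∧ ¬ Uncorrectable K i a)
        = Cor := by
      ext e; simp only [hCor, Finset.mem_filter]; tauto
    rw [← e1, ← e2]
    exact h2
  -- trivial bound on correctable patterns
  have hcor1 : Cor.card ≤ ℓ.choose (ℓ - w) := by
    rw [Nat.choose_symm hw, ← card_wt_eq ℓ w]
    apply Finset.card_le_card
    intro e he
    simp only [hCor, Finset.mem_filter] at he ⊢
    exact ⟨he.1, he.2.2⟩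
  -- bound via the dual coset
  set B := Finset.univ.filter
    (fun v : Fin ℓ → ZMod 2 => wt v = ℓ - w ∧ ∃ c, c ∈ kernelCode K ((i.rev : ℕ)) ∧
      c ∉ kernelCode K (ℓ - (i : ℕ)) ∧ ∀ j, c j ≠ 0 → v j ≠ 0) with hB
  have hcor2 : Cor.card ≤ B.card := by
    apply Finset.card_le_card_of_injOn (fun e => fun j => e j + 1)
    · intro e he
      simp only [hCor, Finset.mem_coe, Finset.mem_filter, Finset.mem_univ, true_and] at he
      obtain ⟨hne, hwe⟩ := he
      obtain ⟨c, hc1, hc2, hc3⟩ := stepA K hsd i e hne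
      simp only [hB, Finset.mem_coe, Finset.mem_filter, Finset.mem_univ, true_and]
      refine ⟨by rw [wt_add_one, hwe], c, hc1, hc2, fun j hj => ?_⟩
      by_cases hej : e j = 0
      · rw [hej]; decide
      · exact absurd (hc3 j hej) hj
    · intro e _ e' _ heq
      funext j
      have := congrFun heq j
      simpa using this
  -- counting covered patterns
  have hBcount : B.card ≤ ∑ j ∈ Finset.range (ℓ - w + 1), (ℓ - j).choose (ℓ - w - j) * A' j := by
    set D' := Finset.univ.filter
      (fun c : Fin ℓ → ZMod 2 => (c ∈ kernelCode K ((i.rev : ℕ)) ∧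
        c ∉ kernelCode K (ℓ - (i : ℕ))) ∧ wt c ≤ ℓ - w) with hD'
    have hsub : B ⊆ D'.biUnion (fun c => Finset.univ.filter
        (fun v : Fin ℓ → ZMod 2 => wt v = ℓ - w ∧ ∀ j, c j ≠ 0 → v j ≠ 0)) := by
      intro v hv
      simp only [hB, Finset.mem_filter, Finset.mem_univ, true_and] at hv
      obtain ⟨hwv, c, hc1, hc2, hc3⟩ := hv
      rw [Finset.mem_biUnion]
      have hwc : wt c ≤ ℓ - w := by
        rw [← hwv]
        apply Finset.card_le_card
        intro j hj
        simp only [Finset.mem_filter, Finset.mem_univ, true_and] at hj ⊢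
        exact hc3 j hj
      refine ⟨c, ?_, ?_⟩
      · simp only [hD', Finset.mem_filter, Finset.mem_univ, true_and]
        exact ⟨⟨hc1, hc2⟩, hwc⟩
      · simp only [Finset.mem_filter, Finset.mem_univ, true_and]
        exact ⟨hwv, hc3⟩
    calc B.card ≤ (D'.biUnion _).card := Finset.card_le_card hsub
      _ ≤ ∑ c ∈ D', (Finset.univ.filter
            (fun v : Fin ℓ → ZMod 2 => wt v = ℓ - w ∧ ∀ j, c j ≠ 0 → v j ≠ 0)).card :=
        Finset.card_biUnion_le
      _ ≤ ∑ c ∈ D', (ℓ - wt c).choose (ℓ - w - wt c) :=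
        Finset.sum_le_sum fun c _ => cover_card_le c (ℓ - w)
      _ = ∑ j ∈ Finset.range (ℓ - w + 1), ∑ c ∈ D'.filter (fun c => wt c = j),
            (ℓ - wt c).choose (ℓ - w - wt c) := by
        rw [Finset.sum_fiberwise_of_maps_to]
        intro c hc
        simp only [hD', Finset.mem_filter] at hc
        rw [Finset.mem_range]
        omega
      _ ≤ ∑ j ∈ Finset.range (ℓ - w + 1), (ℓ - j).choose (ℓ - w - j) * A' j := by
        apply Finset.sum_le_sum
        intro j hj
        rw [Finset.mem_range] at hj
        have heq : ∀ c ∈ D'.filter (fun c => wt c = j),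
            (ℓ - wt c).choose (ℓ - w - wt c) = (ℓ - j).choose (ℓ - w - j) := by
          intro c hc
          simp only [Finset.mem_filter] at hc
          rw [hc.2]
        rw [Finset.sum_congr rfl heq, Finset.sum_const, smul_eq_mul, mul_comm]
        apply Nat.mul_le_mul_left
        rw [hA' j, nat_card_filter]
        apply Finset.card_le_card
        intro c hc
        simp only [hD', Finset.mem_filter, Finset.mem_univ, true_and] at hc ⊢
        exact ⟨hc.1.1.1, hc.1.1.2, hc.2⟩
  -- conclude in ℤ
  have hSZ : (∑ j ∈ Finset.range (ℓ - w + 1), ((ℓ - j).choose (ℓ - w - j) : ℤ) * (A' j : ℤ))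
      = ((∑ j ∈ Finset.range (ℓ - w + 1), (ℓ - j).choose (ℓ - w - j) * A' j : ℕ) : ℤ) := by
    push_cast; rfl
  rw [hSZ, hE]
  have hmin : (Cor.card : ℤ) ≤ min ((∑ j ∈ Finset.range (ℓ - w + 1),
      (ℓ - j).choose (ℓ - w - j) * A' j : ℕ) : ℤ) ((ℓ.choose (ℓ - w) : ℕ) : ℤ) :=
    le_min (by exact_mod_cast le_trans hcor2 hBcount) (by exact_mod_cast hcor1)
  have : ((ℓ.choose w : ℕ) : ℤ) = (Unc.card : ℤ) + (Cor.card : ℤ) := by exact_mod_cast hsplit.symm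
  omega
end

section
/- Let ℓ ≥ 2 and let f_1,…,f_ℓ : [0,1] → [0,1] be functions each of which maps (0,1) into (0,1). Let g : [0,1] → [0,∞), define g_0 = g and g_{n+1}(z) = (1/ℓ) ∑_{i=1}^ℓ g_n(f_i(z)), and suppose b ∈ [0,∞) satisfies g_1(z) ≤ b·g(z) for all z ∈ (0,1). Fix z ∈ (0,1), let 0 < a ≤ b' < 1, and suppose m = inf_{y ∈ [a,b']} g(y) > 0. Let Z_n be the process on Ω = (Fin ℓ)^ℕ with the infinite product μ of uniform probability measures defined by Z_0(ω) = z and Z_{n+1}(ω) = f_{ω(n)}(Z_n(ω)). Then for every n ≥ 0, μ({ω : Z_n(ω) ∈ [a,b']}) ≤ b^n · g(z) / m. -/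
open MeasureTheory

/-- The sequence of functions `g_0 = g`, `g_{n+1}(z) = (1/ℓ) ∑ᵢ g_n(f_i(z))`. -/
noncomputable def gseq {ℓ : ℕ} (f : Fin ℓ → ℝ → ℝ) (g : ℝ → ℝ) : ℕ → ℝ → ℝ
  | 0 => g
  | n + 1 => fun z => (1 / ℓ : ℝ) * ∑ i, gseq f g n (f i z)

/-- The random process `Z_0(ω) = z`, `Z_{n+1}(ω) = f_{ω(n)}(Z_n(ω))`. -/
def Zproc {ℓ : ℕ} (f : Fin ℓ → ℝ → ℝ) (z : ℝ) : ℕ → (ℕ → Fin ℓ) → ℝ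
  | 0 => fun _ => z
  | n + 1 => fun ω => f (ω n) (Zproc f z n ω)

/-- `μ` is the infinite product of uniform probability measures on `Fin ℓ`:
it is a probability measure giving each cylinder on the first `n` coordinates
measure `(1/ℓ)^n`. -/
def IsProductOfUniforms {ℓ : ℕ} (μ : Measure (ℕ → Fin ℓ)) : Prop :=
  IsProbabilityMeasure μ ∧
    ∀ (n : ℕ) (y : Fin n → Fin ℓ),
      μ {ω | ∀ k : Fin n, ω (k : ℕ) = y k} = ((ℓ : ENNReal))⁻¹ ^ n



def Zword {ℓ : ℕ} (f : Fin ℓ → ℝ → ℝ) : ∀ n : ℕ, ℝ → (Fin n → Fin ℓ) → ℝ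
  | 0, z, _ => z
  | n + 1, z, w => Zword f n (f (w 0) z) (w ∘ Fin.succ)

lemma Zproc_succ {ℓ : ℕ} (f : Fin ℓ → ℝ → ℝ) :
    ∀ (n : ℕ) (z : ℝ) (ω : ℕ → Fin ℓ),
      Zproc f z (n + 1) ω = Zproc f (f (ω 0) z) n (fun k => ω (k + 1))
  | 0, z, ω => rfl
  | n + 1, z, ω => by
    show f (ω (n + 1)) (Zproc f z (n + 1) ω) = f (ω (n + 1)) (Zproc f (f (ω 0) z) n _)
    rw [Zproc_succ f n z ω]

lemma Zproc_eq_Zword {ℓ : ℕ} (f : Fin ℓ → ℝ → ℝ) :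
    ∀ (n : ℕ) (z : ℝ) (ω : ℕ → Fin ℓ), Zproc f z n ω = Zword f n z (fun k : Fin n => ω k)
  | 0, z, ω => rfl
  | n + 1, z, ω => by
    rw [Zproc_succ f n z ω, Zproc_eq_Zword f n (f (ω 0) z) (fun k => ω (k + 1))]
    rfl

lemma Zword_cons {ℓ : ℕ} (f : Fin ℓ → ℝ → ℝ) (n : ℕ) (z : ℝ) (i : Fin ℓ) (w : Fin n → Fin ℓ) :
    Zword f (n + 1) z (Fin.cons i w) = Zword f n (f i z) w := by
  simp only [Zword, Fin.cons_zero]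
  congr 1

lemma sum_pi_succ {ℓ n : ℕ} (F : (Fin (n + 1) → Fin ℓ) → ℝ) :
    ∑ w : Fin (n + 1) → Fin ℓ, F w = ∑ i : Fin ℓ, ∑ w : Fin n → Fin ℓ, F (Fin.cons i w) := by
  calc ∑ w : Fin (n + 1) → Fin ℓ, F w
      = ∑ p : Fin ℓ × (Fin n → Fin ℓ), F (Fin.cons p.1 p.2) :=
        Fintype.sum_equiv (Fin.consEquiv (fun _ : Fin (n + 1) => Fin ℓ)).symm _ _
          (fun w => congrArg F (Fin.cons_self_tail w).symm)
    _ = ∑ i : Fin ℓ, ∑ w : Fin n → Fin ℓ, F (Fin.cons i w) := by rw [Fintype.sum_prod_type]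

lemma gseq_eq_sum {ℓ : ℕ} (f : Fin ℓ → ℝ → ℝ) (g : ℝ → ℝ) :
    ∀ (n : ℕ) (z : ℝ), gseq f g n z = (1 / ℓ : ℝ) ^ n * ∑ w : Fin n → Fin ℓ, g (Zword f n z w)
  | 0, z => by simp [gseq, Zword]
  | n + 1, z => by
    show (1 / ℓ : ℝ) * ∑ i, gseq f g n (f i z) = _
    have h : ∀ i : Fin ℓ, gseq f g n (f i z)
        = (1 / ℓ : ℝ) ^ n * ∑ w : Fin n → Fin ℓ, g (Zword f n (f i z) w) :=
      fun i => gseq_eq_sum f g n (f i z)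
    simp only [h]
    rw [sum_pi_succ (fun w => g (Zword f (n + 1) z w))]
    simp only [Zword_cons]
    rw [← Finset.mul_sum, pow_succ]
    ring

lemma Zword_mem_Ioo {ℓ : ℕ} {f : Fin ℓ → ℝ → ℝ}
    (hf' : ∀ i, Set.MapsTo (f i) (Set.Ioo (0 : ℝ) 1) (Set.Ioo (0 : ℝ) 1)) :
    ∀ (n : ℕ) {z : ℝ}, z ∈ Set.Ioo (0 : ℝ) 1 → ∀ w : Fin n → Fin ℓ,
      Zword f n z w ∈ Set.Ioo (0 : ℝ) 1
  | 0, z, hz, w => hz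
  | n + 1, z, hz, w => Zword_mem_Ioo hf' n (hf' (w 0) hz) (w ∘ Fin.succ)

lemma gseq_le_pow {ℓ : ℕ} {f : Fin ℓ → ℝ → ℝ}
    (hf' : ∀ i, Set.MapsTo (f i) (Set.Ioo (0 : ℝ) 1) (Set.Ioo (0 : ℝ) 1))
    {g : ℝ → ℝ} {b : ℝ} (hb : 0 ≤ b)
    (hb1 : ∀ z ∈ Set.Ioo (0 : ℝ) 1, gseq f g 1 z ≤ b * g z) :
    ∀ (n : ℕ) {z : ℝ}, z ∈ Set.Ioo (0 : ℝ) 1 → gseq f g n z ≤ b ^ n * g z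
  | 0, z, hz => by simp [gseq]
  | n + 1, z, hz => by
    show (1 / ℓ : ℝ) * ∑ i, gseq f g n (f i z) ≤ _
    have h1 : ∑ i, gseq f g n (f i z) ≤ ∑ i, b ^ n * g (f i z) :=
      Finset.sum_le_sum fun i _ => gseq_le_pow hf' hb hb1 n (hf' i hz)
    have hℓ0 : (0 : ℝ) ≤ 1 / ℓ := by positivity
    calc (1 / ℓ : ℝ) * ∑ i, gseq f g n (f i z)
        ≤ (1 / ℓ : ℝ) * ∑ i, b ^ n * g (f i z) := by
          exact mul_le_mul_of_nonneg_left h1 hℓ0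
      _ = b ^ n * ((1 / ℓ : ℝ) * ∑ i, g (f i z)) := by
          rw [← Finset.mul_sum]; ring
      _ = b ^ n * gseq f g 1 z := rfl
      _ ≤ b ^ n * (b * g z) := by
          exact mul_le_mul_of_nonneg_left (hb1 z hz) (pow_nonneg hb n)
      _ = b ^ (n + 1) * g z := by rw [pow_succ]; ring


lemma measure_Zproc {ℓ : ℕ} (f : Fin ℓ → ℝ → ℝ) (z : ℝ)
    (μ : Measure (ℕ → Fin ℓ)) (hμ : IsProductOfUniforms μ) (S : Set ℝ) (n : ℕ)
    [DecidablePred fun w : Fin n → Fin ℓ => Zword f n z w ∈ S] :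
    μ {ω | Zproc f z n ω ∈ S} =
      ((Finset.univ.filter (fun w : Fin n → Fin ℓ => Zword f n z w ∈ S)).card : ENNReal)
        * ((ℓ : ENNReal))⁻¹ ^ n := by
  classical
  have hset : {ω | Zproc f z n ω ∈ S}
      = ⋃ w ∈ (Finset.univ.filter fun w : Fin n → Fin ℓ => Zword f n z w ∈ S),
          {ω : ℕ → Fin ℓ | ∀ k : Fin n, ω (k : ℕ) = w k} := by
    ext ω
    simp only [Set.mem_setOf_eq, Set.mem_iUnion, Finset.mem_filter, Finset.mem_univ, true_and,
      Set.mem_setOf_eq, exists_prop]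
    constructor
    · intro h
      exact ⟨fun k => ω k, by rwa [← Zproc_eq_Zword], fun k => rfl⟩
    · rintro ⟨w, hw, hww⟩
      have he : (fun k : Fin n => ω k) = w := funext hww
      rw [Zproc_eq_Zword, he]; exact hw
  rw [hset, measure_biUnion_finset ?_ ?_]
  · rw [Finset.sum_congr rfl (fun w _ => hμ.2 n w), Finset.sum_const, nsmul_eq_mul]
  · intro w hw w' hw' hne
    simp only [Function.onFun]
    apply Set.disjoint_left.2
    intro ω h1 h2
    exact hne (funext fun k => (h1 k).symm.trans (h2 k))
  · intro w hw
    have he : {ω : ℕ → Fin ℓ | ∀ k : Fin n, ω (k : ℕ) = w k}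
        = ⋂ k : Fin n, (fun ω : ℕ → Fin ℓ => ω (k : ℕ)) ⁻¹' {w k} := by
      ext; simp [Set.mem_iInter]
    rw [he]
    exact MeasurableSet.iInter fun k => measurable_pi_apply _ (measurableSet_singleton _)


/-- `μ(Z_n ∈ [a,b']) ≤ bⁿ · g(z) / m`. -/
theorem prob_le_pow_mul {ℓ : ℕ} (hℓ : 2 ≤ ℓ) (f : Fin ℓ → ℝ → ℝ)
    (hf : ∀ i, Set.MapsTo (f i) (Set.Icc (0 : ℝ) 1) (Set.Icc (0 : ℝ) 1))
    (hf' : ∀ i, Set.MapsTo (f i) (Set.Ioo (0 : ℝ) 1) (Set.Ioo (0 : ℝ) 1))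
    (g : ℝ → ℝ) (hg0 : ∀ y ∈ Set.Icc (0 : ℝ) 1, 0 ≤ g y)
    (b : ℝ) (hb : 0 ≤ b)
    (hb1 : ∀ z ∈ Set.Ioo (0 : ℝ) 1, gseq f g 1 z ≤ b * g z)
    (z : ℝ) (hz : z ∈ Set.Ioo (0 : ℝ) 1)
    (a b' : ℝ) (ha : 0 < a) (hab : a ≤ b') (hb' : b' < 1)
    (hm : 0 < sInf (g '' Set.Icc a b'))
    (μ : Measure (ℕ → Fin ℓ)) (hμ : IsProductOfUniforms μ) (n : ℕ) :
    (μ {ω | Zproc f z n ω ∈ Set.Icc a b'}).toReal ≤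
      b ^ n * g z / sInf (g '' Set.Icc a b') := by
  classical
  set m := sInf (g '' Set.Icc a b') with hmdef
  have hℓn0 : ℓ ≠ 0 := by omega
  have hℓ0 : (0 : ℝ) < (ℓ : ℝ) := by positivity
  rw [measure_Zproc f z μ hμ (Set.Icc a b') n, ENNReal.toReal_mul, ENNReal.toReal_pow,
    ENNReal.toReal_inv, ENNReal.toReal_natCast, ENNReal.toReal_natCast]
  rw [le_div_iff₀ hm]
  set T : Finset (Fin n → Fin ℓ) :=
    Finset.univ.filter (fun w => Zword f n z w ∈ Set.Icc a b') with hT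
  have hIccsub : Set.Icc a b' ⊆ Set.Icc (0 : ℝ) 1 :=
    Set.Icc_subset_Icc ha.le hb'.le
  have hbdd : BddBelow (g '' Set.Icc a b') := by
    refine ⟨0, ?_⟩
    rintro x ⟨y, hy, rfl⟩
    exact hg0 y (hIccsub hy)
  have hmle : ∀ w ∈ T, m ≤ g (Zword f n z w) := by
    intro w hw
    have hwmem : Zword f n z w ∈ Set.Icc a b' := (Finset.mem_filter.1 hw).2
    exact csInf_le hbdd ⟨_, hwmem, rfl⟩
  have hZnn : ∀ w : Fin n → Fin ℓ, 0 ≤ g (Zword f n z w) := fun w =>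
    hg0 _ (Set.Ioo_subset_Icc_self (Zword_mem_Ioo hf' n hz w))
  have step1 : (T.card : ℝ) * m ≤ ∑ w : Fin n → Fin ℓ, g (Zword f n z w) := by
    calc (T.card : ℝ) * m = ∑ _w ∈ T, m := by rw [Finset.sum_const, nsmul_eq_mul]
      _ ≤ ∑ w ∈ T, g (Zword f n z w) := Finset.sum_le_sum hmle
      _ ≤ ∑ w : Fin n → Fin ℓ, g (Zword f n z w) :=
          Finset.sum_le_sum_of_subset_of_nonneg (Finset.filter_subset _ _)
            (fun w _ _ => hZnn w)
  have hpow : (0 : ℝ) ≤ ((ℓ : ℝ)⁻¹) ^ n := by positivity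
  calc (T.card : ℝ) * ((ℓ : ℝ)⁻¹) ^ n * m
      = ((ℓ : ℝ)⁻¹) ^ n * ((T.card : ℝ) * m) := by ring
    _ ≤ ((ℓ : ℝ)⁻¹) ^ n * ∑ w : Fin n → Fin ℓ, g (Zword f n z w) :=
        mul_le_mul_of_nonneg_left step1 hpow
    _ = gseq f g n z := by rw [gseq_eq_sum]; rw [one_div]
    _ ≤ b ^ n * g z := gseq_le_pow hf' hb hb1 n hz
end
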